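/- arXiv:2208.01175 — 4 statements merged into one kernel-verified Lean document; each statement's English description precedes it below -/
import Mathlib

section
/- Let T_n be the Fibonacci polynomials (T_0 = 0, T_1 = 1, T_{n+1} = z·T_n + T_{n-1}) and define a sequence p_n in the field ℚ(a, z) by p_0 = 1, p_1 = (z + z^{-1})·a^{-1} − z^{-1}·a^{-3}, and p_n = (z/a)·p_{n-1} + a^{-2}·p_{n-2} for n ≥ 2. Then for all n ≥ 0, p_n = a^{-n}·( T_{n+1}(z) + z^{-1}·(1 − a^{-2})·T_n(z) ). -/
open Polynomial

/-- The Fibonacci polynomials: `T 0 = 0`, `T 1 = 1`, `T (n+2) = z·T (n+1) + T n`. -/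
noncomputable def fibPoly : ℕ → Polynomial ℤ
  | 0 => 0
  | 1 => 1
  | (n + 2) => X * fibPoly (n + 1) + fibPoly n

/-- The field ℚ(a, z) of rational functions in two variables. -/
noncomputable abbrev F2 : Type := RatFunc (RatFunc ℚ)

/-- The variable `a` of ℚ(a, z). -/
noncomputable def aVar : F2 := RatFunc.X

/-- The variable `z` of ℚ(a, z). -/
noncomputable def zVar : F2 := RatFunc.C RatFunc.X

lemma aVar_ne_zero : aVar ≠ 0 := RatFunc.X_ne_zero

lemma zVar_ne_zero : zVar ≠ 0 := by
  simp only [zVar]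
  exact (_root_.map_ne_zero RatFunc.C).mpr RatFunc.X_ne_zero

theorem homfly_An_closed_form (p : ℕ → F2)
    (h0 : p 0 = 1)
    (h1 : p 1 = (zVar + zVar⁻¹) * aVar⁻¹ - zVar⁻¹ * aVar⁻¹ ^ 3)
    (hrec : ∀ n : ℕ, 2 ≤ n → p n = (zVar / aVar) * p (n - 1) + aVar⁻¹ ^ 2 * p (n - 2)) :
    ∀ n : ℕ, p n = aVar⁻¹ ^ n *
      (Polynomial.aeval zVar (fibPoly (n + 1)) +
        zVar⁻¹ * (1 - aVar⁻¹ ^ 2) * Polynomial.aeval zVar (fibPoly n)) := by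
  have ha := aVar_ne_zero
  have hz := zVar_ne_zero
  intro n
  induction n using Nat.twoStepInduction with
  | zero =>
      simp [h0, fibPoly]
  | one =>
      rw [h1]
      show _ = aVar⁻¹ ^ 1 * (aeval zVar (fibPoly 2) + zVar⁻¹ * (1 - aVar⁻¹ ^ 2) * aeval zVar (fibPoly 1))
      simp only [fibPoly, map_add, map_mul, map_one, aeval_X, mul_zero, add_zero, mul_one]
      field_simp
      ring
  | more n ih2 ih1 =>
      have h := hrec (n + 2) (by omega)
      simp only [Nat.add_sub_cancel, show n + 2 - 1 = n + 1 from rfl] at h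
      rw [h, ih1, ih2]
      show _ = aVar⁻¹ ^ (n + 2) * (aeval zVar (X * fibPoly (n + 2) + fibPoly (n + 1)) + _)
      simp only [fibPoly, map_add, map_mul, aeval_X]
      have e1 : aVar⁻¹ ^ (n + 1) = aVar⁻¹ ^ n * aVar⁻¹ := pow_succ _ _
      have e2 : aVar⁻¹ ^ (n + 2) = aVar⁻¹ ^ n * aVar⁻¹ ^ 2 := by ring
      rw [e1, e2]
      generalize aVar⁻¹ ^ n = w
      generalize aeval zVar (fibPoly n) = A
      generalize aeval zVar (fibPoly (n + 1)) = B
      ring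
end

section
/- Define a sequence r_n in ℚ(q) by r_2 = ((q² − q + 1)/(q − 1))², r_3 = (q⁴ − q³ + q² − q + 1)/(q − 1), and r_n = (q − 1)·r_{n−1} + q·r_{n−2} for n ≥ 4. Then for all even n ≥ 2, r_n = (q^{n+3} + 1)/((q + 1)(q − 1)²) + (q − q^n)/(q − 1), and for all odd n ≥ 3, r_n = (q^{n+3} − 1)/((q² − 1)(q − 1)) − (q + q^n)/(q − 1). -/
namespace DnAux

noncomputable abbrev XX : RatFunc ℚ := RatFunc.X

lemma hX1 : XX - 1 ≠ 0 := by
  have h : XX - 1 = algebraMap (Polynomial ℚ) _ (Polynomial.X - 1) := by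
    simp [XX, map_sub]
  rw [h]
  exact RatFunc.algebraMap_ne_zero (by simpa using Polynomial.X_sub_C_ne_zero (R := ℚ) 1)

lemma hX2 : XX + 1 ≠ 0 := by
  have h : XX + 1 = algebraMap (Polynomial ℚ) _ (Polynomial.X + 1) := by
    simp [XX, map_add]
  rw [h]
  refine RatFunc.algebraMap_ne_zero (fun hc => ?_)
  have := congrArg (Polynomial.eval 1) hc
  simp at this

noncomputable def D : RatFunc ℚ := (XX + 1) * (XX - 1) ^ 2

lemma hD : D ≠ 0 := mul_ne_zero hX2 (pow_ne_zero 2 hX1)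

noncomputable def N (n : ℕ) : RatFunc ℚ :=
  if Even n then XX ^ (n + 3) + 1 + (XX - XX ^ n) * (XX ^ 2 - 1)
  else XX ^ (n + 3) - 1 - (XX + XX ^ n) * (XX ^ 2 - 1)

lemma even_form (n : ℕ) (he : Even n) :
    (XX ^ (n + 3) + 1) / ((XX + 1) * (XX - 1) ^ 2) + (XX - XX ^ n) / (XX - 1) = N n / D := by
  have h : (XX - XX ^ n) / (XX - 1) = (XX - XX ^ n) * (XX ^ 2 - 1) / D := by
    rw [div_eq_div_iff hX1 hD, D]; ring
  rw [h, N, if_pos he, D, ← add_div]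

lemma odd_form (n : ℕ) (ho : ¬ Even n) :
    (XX ^ (n + 3) - 1) / ((XX ^ 2 - 1) * (XX - 1)) - (XX + XX ^ n) / (XX - 1) = N n / D := by
  have h1 : (XX ^ (n + 3) - 1) / ((XX ^ 2 - 1) * (XX - 1)) = (XX ^ (n + 3) - 1) / D := by
    congr 1; rw [D]; ring
  have h2 : (XX + XX ^ n) / (XX - 1) = (XX + XX ^ n) * (XX ^ 2 - 1) / D := by
    rw [div_eq_div_iff hX1 hD, D]; ring
  rw [h1, h2, N, if_neg ho, div_sub_div_same]

lemma key (r : ℕ → RatFunc ℚ)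
    (h2 : r 2 = ((XX ^ 2 - XX + 1) / (XX - 1)) ^ 2)
    (h3 : r 3 = (XX ^ 4 - XX ^ 3 + XX ^ 2 - XX + 1) / (XX - 1))
    (hrec : ∀ n : ℕ, 4 ≤ n → r n = (XX - 1) * r (n - 1) + XX * r (n - 2)) :
    ∀ n : ℕ, r (n + 2) = N (n + 2) / D ∧ r (n + 3) = N (n + 3) / D := by
  have b2 : r 2 = N 2 / D := by
    rw [h2, div_pow, div_eq_div_iff (pow_ne_zero 2 hX1) hD, N, if_pos (by decide : Even 2), D]
    ring
  have b3 : r 3 = N 3 / D := by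
    rw [h3, div_eq_div_iff hX1 hD, N, if_neg (by decide : ¬ Even 3), D]
    ring
  intro n
  induction n with
  | zero => exact ⟨b2, b3⟩
  | succ m ih =>
    refine ⟨ih.2, ?_⟩
    have hr := hrec (m + 4) (by omega)
    simp only [show m + 4 - 1 = m + 3 from rfl, show m + 4 - 2 = m + 2 from rfl] at hr
    rw [show m + 1 + 3 = m + 4 from rfl, hr, ih.1, ih.2]
    rw [mul_div_assoc' , mul_div_assoc', ← add_div, div_eq_div_iff hD hD]
    rcases Nat.even_or_odd m with he | ho
    · have e2 : Even (m + 2) := by simpa using he.add (by decide : Even 2)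
      have e4 : Even (m + 4) := by simpa using he.add (by decide : Even 4)
      have o3 : ¬ Even (m + 3) := by simp [Nat.even_add_one, e2]
      simp only [N, if_pos e2, if_pos e4, if_neg o3]
      ring
    · have o2 : ¬ Even (m + 2) := by simpa [Nat.even_add_one, Nat.even_add] using ho
      have o4 : ¬ Even (m + 4) := by simpa [Nat.even_add_one, Nat.even_add] using ho
      have e3 : Even (m + 3) := by simpa [Nat.even_add_one] using o2
      simp only [N, if_neg o2, if_neg o4, if_pos e3]
      ring

end DnAux

theorem pointCount_Dn_closed_form (r : ℕ → RatFunc ℚ)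
    (h2 : r 2 = (((RatFunc.X : RatFunc ℚ) ^ 2 - RatFunc.X + 1) / (RatFunc.X - 1)) ^ 2)
    (h3 : r 3 = ((RatFunc.X : RatFunc ℚ) ^ 4 - RatFunc.X ^ 3 + RatFunc.X ^ 2 - RatFunc.X + 1) /
      (RatFunc.X - 1))
    (hrec : ∀ n : ℕ, 4 ≤ n →
      r n = ((RatFunc.X : RatFunc ℚ) - 1) * r (n - 1) + RatFunc.X * r (n - 2)) :
    (∀ n : ℕ, 2 ≤ n → Even n →
      r n = ((RatFunc.X : RatFunc ℚ) ^ (n + 3) + 1) /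
          ((RatFunc.X + 1) * (RatFunc.X - 1) ^ 2) +
        ((RatFunc.X : RatFunc ℚ) - RatFunc.X ^ n) / (RatFunc.X - 1)) ∧
    (∀ n : ℕ, 3 ≤ n → Odd n →
      r n = ((RatFunc.X : RatFunc ℚ) ^ (n + 3) - 1) /
          (((RatFunc.X : RatFunc ℚ) ^ 2 - 1) * (RatFunc.X - 1)) -
        ((RatFunc.X : RatFunc ℚ) + RatFunc.X ^ n) / (RatFunc.X - 1)) := by
  have key := DnAux.key r h2 h3 hrec
  constructor
  · intro n hn he
    obtain ⟨m, rfl⟩ : ∃ m, n = m + 2 := ⟨n - 2, by omega⟩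
    rw [DnAux.even_form _ he, (key m).1]
  · intro n hn ho
    obtain ⟨m, rfl⟩ : ∃ m, n = m + 3 := ⟨n - 3, by omega⟩
    rw [DnAux.odd_form _ (Nat.not_even_iff_odd.mpr ho), (key m).2]
end

section
/- For every n ≥ 0, the identity Σ_{k=0}^{⌊(n+1)/2⌋} C(n + 1 − k, k) · (q − 1)^{n − 2k} · q^k = (q^{n+2} − (−1)^n)/(q² − 1) holds in the field of rational functions ℚ(q). -/
open Finset

noncomputable def qX : RatFunc ℚ := RatFunc.X

lemma hqm1 : qX - 1 ≠ 0 := by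
  have h : qX - 1 = algebraMap (Polynomial ℚ) (RatFunc ℚ) (Polynomial.X - 1) := by
    simp [qX, map_sub, RatFunc.algebraMap_X]
  rw [h]
  refine RatFunc.algebraMap_ne_zero ?_
  intro hc
  have := congrArg (Polynomial.eval 0) hc
  simp at this

lemma hqp1 : qX + 1 ≠ 0 := by
  have h : qX + 1 = algebraMap (Polynomial ℚ) (RatFunc ℚ) (Polynomial.X + 1) := by
    simp [qX, map_add, RatFunc.algebraMap_X]
  rw [h]
  refine RatFunc.algebraMap_ne_zero ?_
  intro hc
  have := congrArg (Polynomial.eval 0) hc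
  simp at this

lemma hsq : qX ^ 2 - 1 ≠ 0 := by
  have h : qX ^ 2 - 1 = (qX - 1) * (qX + 1) := by ring
  rw [h]; exact mul_ne_zero hqm1 hqp1

noncomputable def Sa (n : ℕ) : RatFunc ℚ :=
  ∑ k ∈ Finset.range (n + 2),
    ((n + 1 - k).choose k : RatFunc ℚ) * (qX - 1) ^ ((n : ℤ) - 2 * k) * qX ^ k

lemma Srec (n : ℕ) : Sa (n + 2) = (qX - 1) * Sa (n + 1) + qX * Sa n := by
  have key : ∀ i ∈ Finset.range (n+3),
      ((n + 2 + 1 - (i+1)).choose (i+1) : RatFunc ℚ) *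
        (qX - 1) ^ (((n+2 : ℕ) : ℤ) - 2 * ((i+1 : ℕ) : ℤ)) * qX ^ (i+1) =
      (qX - 1) * (((n + 1 + 1 - (i+1)).choose (i+1) : RatFunc ℚ) *
        (qX - 1) ^ (((n+1 : ℕ) : ℤ) - 2 * ((i+1 : ℕ) : ℤ)) * qX ^ (i+1)) +
      qX * (((n + 1 - i).choose i : RatFunc ℚ) *
        (qX - 1) ^ ((n : ℤ) - 2 * (i : ℤ)) * qX ^ i) := by
    intro i him
    have him' := Finset.mem_range.mp him
    rcases le_or_gt i (n+1) with hi | hi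
    · have h1 : n + 2 + 1 - (i+1) = (n + 1 - i) + 1 := by omega
      have h2 : n + 1 + 1 - (i+1) = n + 1 - i := by omega
      rw [h1, h2, Nat.choose_succ_succ]
      have hE1 : ((n+2 : ℕ) : ℤ) - 2 * ((i+1 : ℕ) : ℤ) = (n : ℤ) - 2 * (i : ℤ) := by
        push_cast; ring
      have hE2 : ((n+1 : ℕ) : ℤ) - 2 * ((i+1 : ℕ) : ℤ) = ((n : ℤ) - 2 * (i : ℤ)) - 1 := by
        push_cast; ring
      have hz : (qX - 1) * (qX - 1) ^ ((n : ℤ) - 2 * (i : ℤ) - 1) =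
          (qX - 1) ^ ((n : ℤ) - 2 * (i : ℤ)) := by
        conv_rhs => rw [show (n : ℤ) - 2 * (i : ℤ) = ((n : ℤ) - 2 * (i : ℤ) - 1) + 1 by ring]
        rw [zpow_add_one₀ hqm1]; ring
      rw [hE1, hE2, pow_succ]
      push_cast
      linear_combination (-(((n + 1 - i).choose (i+1) : RatFunc ℚ)) * (qX ^ i * qX)) * hz
    · have hi' : i = n + 2 := by omega
      subst hi'
      have c1 : (n + 2 + 1 - (n+2+1)).choose (n+2+1) = 0 := by
        simp [Nat.choose_eq_zero_of_lt]
      have c2 : (n + 1 + 1 - (n+2+1)).choose (n+2+1) = 0 := by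
        simp [Nat.choose_eq_zero_of_lt]
      have c3 : (n + 1 - (n+2)).choose (n+2) = 0 := by
        simp [Nat.choose_eq_zero_of_lt]
      rw [c1, c2, c3]; push_cast; ring
  have hL : Sa (n+2) = (∑ i ∈ Finset.range (n+3),
      ((n + 2 + 1 - (i+1)).choose (i+1) : RatFunc ℚ) *
        (qX - 1) ^ (((n+2 : ℕ) : ℤ) - 2 * ((i+1 : ℕ) : ℤ)) * qX ^ (i+1)) +
      (qX - 1) ^ (((n+2 : ℕ) : ℤ)) := by
    unfold Sa
    rw [show n+2+2 = n+3+1 from rfl, Finset.sum_range_succ']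
    norm_num
  have hR1 : (qX - 1) * Sa (n+1) = (∑ i ∈ Finset.range (n+2),
      (qX - 1) * (((n + 1 + 1 - (i+1)).choose (i+1) : RatFunc ℚ) *
        (qX - 1) ^ (((n+1 : ℕ) : ℤ) - 2 * ((i+1 : ℕ) : ℤ)) * qX ^ (i+1))) +
      (qX - 1) ^ (((n+2 : ℕ) : ℤ)) := by
    unfold Sa
    rw [show n+1+2 = n+2+1 from rfl, Finset.sum_range_succ', mul_add, Finset.mul_sum]
    congr 1
    have : ((n+2 : ℕ) : ℤ) = ((n+1 : ℕ) : ℤ) + 1 := by push_cast; ring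
    rw [this, zpow_add_one₀ hqm1]
    norm_num
    ring
  have hR2 : qX * Sa n = ∑ i ∈ Finset.range (n+2),
      qX * (((n + 1 - i).choose i : RatFunc ℚ) *
        (qX - 1) ^ ((n : ℤ) - 2 * (i : ℤ)) * qX ^ i) := by
    unfold Sa; rw [Finset.mul_sum]
  have e1 : ∑ i ∈ Finset.range (n+3),
      (qX - 1) * (((n + 1 + 1 - (i+1)).choose (i+1) : RatFunc ℚ) *
        (qX - 1) ^ (((n+1 : ℕ) : ℤ) - 2 * ((i+1 : ℕ) : ℤ)) * qX ^ (i+1)) =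
      ∑ i ∈ Finset.range (n+2),
      (qX - 1) * (((n + 1 + 1 - (i+1)).choose (i+1) : RatFunc ℚ) *
        (qX - 1) ^ (((n+1 : ℕ) : ℤ) - 2 * ((i+1 : ℕ) : ℤ)) * qX ^ (i+1)) := by
    rw [Finset.sum_range_succ]
    have h0 : (n + 1 + 1 - (n+2+1)).choose (n+2+1) = 0 := by
      simp [Nat.choose_eq_zero_of_lt]
    rw [h0]; push_cast; ring
  have e2 : ∑ i ∈ Finset.range (n+3),
      qX * (((n + 1 - i).choose i : RatFunc ℚ) *
        (qX - 1) ^ ((n : ℤ) - 2 * (i : ℤ)) * qX ^ i) =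
      ∑ i ∈ Finset.range (n+2),
      qX * (((n + 1 - i).choose i : RatFunc ℚ) *
        (qX - 1) ^ ((n : ℤ) - 2 * (i : ℤ)) * qX ^ i) := by
    rw [Finset.sum_range_succ]
    have h0 : (n + 1 - (n+2)).choose (n+2) = 0 := by
      simp [Nat.choose_eq_zero_of_lt]
    rw [h0]; push_cast; ring
  rw [hL, hR1, hR2, Finset.sum_congr rfl key, Finset.sum_add_distrib, e1, e2]
  ring

lemma Sa_closed : ∀ n : ℕ, Sa n = (qX ^ (n + 2) - (-1) ^ n) / (qX ^ 2 - 1) := by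
  have key : ∀ n : ℕ, Sa n = (qX ^ (n + 2) - (-1) ^ n) / (qX ^ 2 - 1) ∧
      Sa (n + 1) = (qX ^ (n + 1 + 2) - (-1) ^ (n + 1)) / (qX ^ 2 - 1) := by
    intro n
    induction n with
    | zero =>
      constructor
      · have h0 : Sa 0 = 1 := by
          simp [Sa, Finset.sum_range_succ]
        rw [h0]
        rw [eq_div_iff hsq]; ring
      · have h1 : Sa 1 = (qX - 1) + qX * (qX - 1)⁻¹ := by
          simp [Sa, Finset.sum_range_succ]
          ring
        rw [h1, eq_div_iff hsq]
        linear_combination (qX * (qX + 1)) * mul_inv_cancel₀ hqm1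
    | succ m ih =>
      refine ⟨ih.2, ?_⟩
      rw [Srec m, ih.1, ih.2]
      rw [← mul_div_assoc, ← mul_div_assoc, ← add_div, div_eq_div_iff hsq hsq]
      ring
  exact fun n => (key n).1

theorem pathGraph_pointCount_closed_form (n : ℕ) :
    ∑ k ∈ Finset.range ((n + 1) / 2 + 1),
        ((n + 1 - k).choose k : RatFunc ℚ) *
          ((RatFunc.X : RatFunc ℚ) - 1) ^ ((n : ℤ) - 2 * k) *
          (RatFunc.X : RatFunc ℚ) ^ k =
      ((RatFunc.X : RatFunc ℚ) ^ (n + 2) - (-1) ^ n) / ((RatFunc.X : RatFunc ℚ) ^ 2 - 1) := by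
  have hsub : Finset.range ((n + 1) / 2 + 1) ⊆ Finset.range (n + 2) := by
    apply Finset.range_subset_range.mpr; omega
  have hzero : ∀ k ∈ Finset.range (n + 2), k ∉ Finset.range ((n + 1) / 2 + 1) →
      ((n + 1 - k).choose k : RatFunc ℚ) * (qX - 1) ^ ((n : ℤ) - 2 * k) * qX ^ k = 0 := by
    intro k _ hk
    have hk' : (n + 1) / 2 + 1 ≤ k := by
      by_contra hc
      exact hk (Finset.mem_range.mpr (by omega))
    have : n + 1 - k < k := by omega
    rw [Nat.choose_eq_zero_of_lt this]
    norm_num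
  have heq : ∑ k ∈ Finset.range ((n + 1) / 2 + 1),
      ((n + 1 - k).choose k : RatFunc ℚ) * (qX - 1) ^ ((n : ℤ) - 2 * k) * qX ^ k = Sa n :=
    Finset.sum_subset hsub hzero
  show ∑ k ∈ Finset.range ((n + 1) / 2 + 1),
      ((n + 1 - k).choose k : RatFunc ℚ) * (qX - 1) ^ ((n : ℤ) - 2 * k) * qX ^ k =
      (qX ^ (n + 2) - (-1) ^ n) / (qX ^ 2 - 1)
  rw [heq, Sa_closed]
end

section
/- For a finite simple graph G with n vertices, define the weighted independent set invariant I(G) = Σ_k a_k(G) · (q − 1)^{n − 2k} · q^k in ℚ(q), where a_k(G) is the number of k-element independent sets of G. If v is a leaf vertex of G (a vertex of degree exactly 1) with unique neighbor u, then I(G) = (q − 1)·I(G − {v}) + q·I(G − {u, v}). -/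
set_option maxHeartbeats 1000000
open scoped Classical

/-- The weighted independent-set invariant
`I(G) = Σ_s (q − 1)^(n − 2|s|) · q^|s|` in ℚ(q), where the sum is over
independent sets `s` of `G` and `n = |V|`. -/
noncomputable def indepPoly {V : Type*} [Fintype V] (G : SimpleGraph V) : RatFunc ℚ :=
  ∑ s ∈ Finset.univ.filter (fun s : Finset V => ∀ i ∈ s, ∀ j ∈ s, ¬ G.Adj i j),
    ((RatFunc.X : RatFunc ℚ) - 1) ^ ((Fintype.card V : ℤ) - 2 * s.card) *
      (RatFunc.X : RatFunc ℚ) ^ s.card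

lemma indepPoly_induce {V : Type*} [Fintype V] (G : SimpleGraph V) (p : Set V)
    [Fintype ↥p] :
    indepPoly (G.induce p) =
      ∑ s ∈ Finset.univ.filter
        (fun s : Finset V => (∀ i ∈ s, ∀ j ∈ s, ¬ G.Adj i j) ∧ ∀ x ∈ s, x ∈ p),
        ((RatFunc.X : RatFunc ℚ) - 1) ^ ((Fintype.card ↥p : ℤ) - 2 * s.card) *
          (RatFunc.X : RatFunc ℚ) ^ s.card := by
  rw [indepPoly]
  refine Finset.sum_nbij' (fun s => s.map (Function.Embedding.subtype _))
    (fun s => s.subtype _) ?_ ?_ ?_ ?_ ?_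
  · intro s hs
    simp only [Finset.mem_filter, Finset.mem_univ, true_and] at hs ⊢
    constructor
    · rintro i hi j hj hadj
      simp only [Finset.mem_map, Function.Embedding.coe_subtype] at hi hj
      obtain ⟨a, ha, rfl⟩ := hi
      obtain ⟨b, hb, rfl⟩ := hj
      exact hs a ha b hb hadj
    · intro x hx
      simp only [Finset.mem_map, Function.Embedding.coe_subtype] at hx
      obtain ⟨a, _, rfl⟩ := hx
      exact a.2
  · intro s hs
    simp only [Finset.mem_filter, Finset.mem_univ, true_and] at hs ⊢
    intro i hi j hj hadj
    rw [Finset.mem_subtype] at hi hj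
    exact hs.1 i hi j hj hadj
  · intro s hs
    ext a
    simp
  · intro s hs
    simp only [Finset.mem_filter, Finset.mem_univ, true_and] at hs
    ext a
    simp only [Finset.mem_map, Finset.mem_subtype, Function.Embedding.coe_subtype,
      Subtype.exists, exists_and_left, exists_prop, exists_eq_right_right]
    exact ⟨fun h => h.1, fun h => ⟨h, hs.2 a h⟩⟩
  · intro s hs
    rw [Finset.card_map]

theorem indepPoly_leaf_recurrence {V : Type*} [Fintype V] (G : SimpleGraph V) (v u : V)
    (hadj : G.Adj v u) (hleaf : ∀ w : V, G.Adj v w → w = u) :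
    indepPoly G =
      ((RatFunc.X : RatFunc ℚ) - 1) * indepPoly (G.induce {x : V | x ≠ v}) +
        (RatFunc.X : RatFunc ℚ) * indepPoly (G.induce {x : V | x ≠ v ∧ x ≠ u}) := by
  classical
  have hvu : v ≠ u := G.ne_of_adj hadj
  have hX1 : (RatFunc.X : RatFunc ℚ) - 1 ≠ 0 := by
    intro h
    have hx : (RatFunc.X : RatFunc ℚ) = 1 := by linear_combination h
    have hx' : algebraMap (Polynomial ℚ) (RatFunc ℚ) Polynomial.X
        = algebraMap (Polynomial ℚ) (RatFunc ℚ) 1 := by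
      simpa [RatFunc.algebraMap_X, map_one] using hx
    have := RatFunc.algebraMap_injective ℚ hx'
    have := congrArg Polynomial.natDegree this
    simpa using this
  have hn : 2 ≤ Fintype.card V := by
    have : ({v, u} : Finset V).card ≤ Fintype.card V := Finset.card_le_univ _
    rwa [Finset.card_insert_of_notMem (by simp [hvu]), Finset.card_singleton] at this
  have hn1 : (Fintype.card ↑{x : V | x ≠ v} : ℤ) = (Fintype.card V : ℤ) - 1 := by
    have h : Fintype.card ↑{x : V | x ≠ v} = Fintype.card V - 1 := by
      rw [Fintype.card_subtype]
      have : (Finset.univ.filter (fun x : V => x ∈ {x : V | x ≠ v}))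
          = Finset.univ \ {v} := by ext x; simp
      rw [this, Finset.card_sdiff_of_subset (by simp), Finset.card_singleton, Finset.card_univ]
    rw [h]
    push_cast [Nat.cast_sub (by omega : 1 ≤ Fintype.card V)]
    ring
  have hn2 : (Fintype.card ↑{x : V | x ≠ v ∧ x ≠ u} : ℤ) = (Fintype.card V : ℤ) - 2 := by
    have h : Fintype.card ↑{x : V | x ≠ v ∧ x ≠ u} = Fintype.card V - 2 := by
      rw [Fintype.card_subtype]
      have : (Finset.univ.filter (fun x : V => x ∈ {x : V | x ≠ v ∧ x ≠ u}))
          = Finset.univ \ {v, u} := by ext x; simp [not_or]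
      rw [this, Finset.card_sdiff_of_subset (by simp), Finset.card_univ]
      congr 1
      rw [Finset.card_insert_of_notMem (by simp [hvu]), Finset.card_singleton]
    rw [h]
    push_cast [Nat.cast_sub hn]
    ring
  have hterm1 : ((RatFunc.X : RatFunc ℚ) - 1) * indepPoly (G.induce {x : V | x ≠ v})
      = ∑ s ∈ Finset.univ.filter
          (fun s : Finset V => (∀ i ∈ s, ∀ j ∈ s, ¬ G.Adj i j) ∧ ∀ x ∈ s, x ≠ v),
          ((RatFunc.X : RatFunc ℚ) - 1) ^ ((Fintype.card V : ℤ) - 2 * s.card) *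
            (RatFunc.X : RatFunc ℚ) ^ s.card := by
    rw [indepPoly_induce, Finset.mul_sum]
    refine Finset.sum_congr ?_ ?_
    · ext s; simp
    · intro s _
      rw [hn1]
      rw [show (Fintype.card V : ℤ) - 2 * s.card
          = 1 + ((Fintype.card V : ℤ) - 1 - 2 * s.card) by ring,
        zpow_add₀ hX1, zpow_one]
      ring
  have hterm2 : (RatFunc.X : RatFunc ℚ) * indepPoly (G.induce {x : V | x ≠ v ∧ x ≠ u})
      = ∑ s ∈ Finset.univ.filter
          (fun s : Finset V => (∀ i ∈ s, ∀ j ∈ s, ¬ G.Adj i j) ∧ ∀ x ∈ s, x ≠ v ∧ x ≠ u),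
          ((RatFunc.X : RatFunc ℚ) - 1) ^ ((Fintype.card V : ℤ) - 2 * (s.card + 1)) *
            (RatFunc.X : RatFunc ℚ) ^ (s.card + 1) := by
    rw [indepPoly_induce, Finset.mul_sum]
    refine Finset.sum_congr ?_ ?_
    · ext s; simp
    · intro s _
      rw [hn2]
      rw [show (Fintype.card V : ℤ) - 2 * ((s.card : ℤ) + 1)
          = (Fintype.card V : ℤ) - 2 - 2 * s.card by ring, pow_succ]
      ring
  rw [indepPoly, ← Finset.sum_filter_add_sum_filter_not _ (fun s : Finset V => v ∉ s)]
  rw [hterm1, hterm2]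
  congr 1
  · refine Finset.sum_congr ?_ (fun _ _ => rfl)
    rw [Finset.filter_filter]
    ext s
    simp only [Finset.mem_filter, Finset.mem_univ, true_and]
    constructor
    · rintro ⟨h1, h2⟩
      exact ⟨h1, fun x hx hxv => h2 (hxv ▸ hx)⟩
    · rintro ⟨h1, h2⟩
      exact ⟨h1, fun hv => h2 v hv rfl⟩
  · simp only [not_not, Finset.filter_filter]
    refine Finset.sum_nbij' (fun s => s.erase v) (fun s => insert v s) ?_ ?_ ?_ ?_ ?_
    · intro s hs
      simp only [Finset.mem_filter, Finset.mem_univ, true_and] at hs ⊢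
      obtain ⟨hind, hv⟩ := hs
      refine ⟨fun i hi j hj => hind i (Finset.mem_of_mem_erase hi) j
        (Finset.mem_of_mem_erase hj), ?_⟩
      intro x hx
      refine ⟨Finset.ne_of_mem_erase hx, ?_⟩
      rintro rfl
      exact hind v hv x (Finset.mem_of_mem_erase hx) hadj
    · intro s hs
      simp only [Finset.mem_filter, Finset.mem_univ, true_and] at hs ⊢
      obtain ⟨hind, hvu'⟩ := hs
      refine ⟨?_, Finset.mem_insert_self v s⟩
      intro i hi j hj hadj'
      rcases Finset.mem_insert.mp hi with rfl | hi'
      · rcases Finset.mem_insert.mp hj with rfl | hj'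
        · exact G.loopless.irrefl _ hadj'
        · exact (hvu' j hj').2 (hleaf j hadj')
      · rcases Finset.mem_insert.mp hj with rfl | hj'
        · exact (hvu' i hi').2 (hleaf i (G.symm.symm _ _ hadj'))
        · exact hind i hi' j hj' hadj'
    · intro s hs
      simp only [Finset.mem_filter, Finset.mem_univ, true_and] at hs
      exact Finset.insert_erase hs.2
    · intro s hs
      simp only [Finset.mem_filter, Finset.mem_univ, true_and] at hs
      exact Finset.erase_insert (fun hv => (hs.2 v hv).1 rfl)
    · intro s hs
      simp only [Finset.mem_filter, Finset.mem_univ, true_and] at hs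
      have h1 : 1 ≤ s.card := Finset.card_pos.mpr ⟨v, hs.2⟩
      rw [Finset.card_erase_of_mem hs.2]
      have hz : ((Fintype.card V : ℤ) - 2 * ((((s.card - 1 : ℕ) : ℤ)) + 1))
          = (Fintype.card V : ℤ) - 2 * s.card := by
        push_cast [Nat.cast_sub h1]; ring
      have hc : (s.card - 1) + 1 = s.card := by omega
      rw [hz, hc]
end
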